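/- Let $N$ be a $(p+q+1)\times(p+q+1)$ matrix over a commutative ring with block form $N = \begin{pmatrix} B & 0 \\ C & A\end{pmatrix}$, where $B$ is $q \times (q+1)$, $C$ is $(p+1)\times(q+1)$, $A$ is $(p+1)\times p$, and the zero block is $q\times p$. Then $\det(N) = \sum_{a=1}^{p+1}\sum_{b=1}^{q+1} (-1)^{q+a+b} C_{a,b}\det(A_{\hat a})\det(B^{\hat b})$, where $A_{\hat a}$ denotes $A$ with row $a$ removed and $B^{\hat b}$ denotes $B$ with column $b$ removed. -/

import Mathlib

open Matrix in
private def rMap (p q : ℕ) : Fin (p + q + 1) → Fin q ⊕ Fin (p + 1) :=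
  fun i => if h : (i : ℕ) < q then .inl ⟨i, h⟩ else .inr ⟨(i : ℕ) - q, by omega⟩

open Matrix in
private def cMap (p q : ℕ) : Fin (p + q + 1) → Fin (q + 1) ⊕ Fin p :=
  fun i => if h : (i : ℕ) < q + 1 then .inl ⟨i, h⟩ else .inr ⟨(i : ℕ) - (q + 1), by omega⟩

private lemma sumEquiv_symm (m n : ℕ) (i : Fin (m + n)) :
    finSumFinEquiv.symm i =
      if h : (i : ℕ) < m then Sum.inl ⟨i, h⟩ else Sum.inr ⟨(i : ℕ) - m, by omega⟩ := by
  by_cases h : (i : ℕ) < m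
  · have hi : i = Fin.castAdd n ⟨i, h⟩ := Fin.ext rfl
    rw [hi, finSumFinEquiv_symm_apply_castAdd]
    simp [h]
  · have hi : i = Fin.natAdd m ⟨(i : ℕ) - m, by omega⟩ := Fin.ext (by simp; omega)
    rw [hi, finSumFinEquiv_symm_apply_natAdd]
    simp [h]

set_option maxHeartbeats 1000000 in
private lemma aux_det {R : Type*} [CommRing R] (p : ℕ) (A : Matrix (Fin (p + 1)) (Fin p) R) :
    ∀ (q : ℕ) (B : Matrix (Fin q) (Fin (q + 1)) R) (C : Matrix (Fin (p + 1)) (Fin (q + 1)) R),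
      ((Matrix.fromBlocks B 0 C A).submatrix (rMap p q) (cMap p q)).det
        = ∑ a : Fin (p + 1), (-1 : R) ^ (a : ℕ) * (A.submatrix a.succAbove id).det
            * (Matrix.of (Fin.snoc B (C a))).det := by
  intro q
  induction q with
  | zero =>
      intro B C
      rw [Matrix.det_succ_column_zero]
      apply Finset.sum_congr rfl
      intro a _
      have h1 : ((Matrix.fromBlocks B 0 C A).submatrix (rMap p 0) (cMap p 0)) a 0 = C a 0 := by
        simp [rMap, cMap, Matrix.fromBlocks]
      have h2 : ((Matrix.fromBlocks B 0 C A).submatrix (rMap p 0) (cMap p 0)).submatrix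
          a.succAbove Fin.succ = A.submatrix a.succAbove id := by
        ext i j
        simp [rMap, cMap, Matrix.fromBlocks]
      have h3 : (Matrix.of (Fin.snoc B (C a))).det = C a 0 := by
        simp [Matrix.det_fin_one, Fin.snoc]
      rw [h1, h2, h3]
      ring
  | succ q ih =>
      intro B C
      set M := (Matrix.fromBlocks B 0 C A).submatrix (rMap p (q + 1)) (cMap p (q + 1)) with hM
      set e : Fin (q + 2) ⊕ Fin p ≃ Fin (p + (q + 1) + 1) :=
        finSumFinEquiv.trans (finCongr (by omega)) with he
      have heb : ∀ b : Fin (q + 2), ((e (Sum.inl b)) : ℕ) = b := by simp [he]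
      have hek : ∀ k : Fin p, ((e (Sum.inr k)) : ℕ) = q + 2 + k := by
        intro k; simp [he]; omega
      rw [Matrix.det_succ_row_zero]
      rw [show (∑ j : Fin (p + (q+1) + 1), (-1 : R) ^ (j : ℕ) * M 0 j *
            (M.submatrix Fin.succ j.succAbove).det)
          = ∑ x : Fin (q + 2) ⊕ Fin p, (-1 : R) ^ ((e x : Fin (p+(q+1)+1)) : ℕ) * M 0 (e x) *
            (M.submatrix Fin.succ (e x).succAbove).det from
        (Fintype.sum_equiv e _ _ (fun x => rfl)).symm]
      rw [Fintype.sum_sum_type]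
      have hzero : ∀ k : Fin p, M 0 (e (Sum.inr k)) = 0 := by
        intro k
        have : ((e (Sum.inr k)) : ℕ) = q + 2 + k := hek k
        simp only [hM, Matrix.submatrix_apply]
        rw [show cMap p (q+1) (e (Sum.inr k)) = Sum.inr ⟨k, k.2⟩ by
          simp only [cMap, this]; rw [dif_neg (by omega)]; congr 1 <;> exact Fin.ext (by simp)]
        rw [show rMap p (q+1) 0 = Sum.inl ⟨0, by omega⟩ by
          simp only [rMap]; rw [dif_pos (by simp)]; congr 1]
        simp
      have hsa : ∀ b : Fin (q + 2), ∀ j : Fin (p + (q + 1)), (((e (Sum.inl b)).succAbove j) : ℕ)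
          = if (j : ℕ) < (b : ℕ) then (j : ℕ) else (j : ℕ) + 1 := by
        intro b j
        rw [Fin.succAbove]
        rcases lt_or_ge ((j : ℕ)) ((b : ℕ)) with h | h
        · rw [if_pos (by rw [Fin.lt_def]; simp [heb b]; omega), if_pos h]; simp
        · rw [if_neg (by rw [Fin.lt_def]; simp [heb b]; omega), if_neg (by omega)]; simp
      have hsb : ∀ b : Fin (q + 2), ∀ j : Fin (q + 1), ((b.succAbove j) : ℕ)
          = if (j : ℕ) < (b : ℕ) then (j : ℕ) else (j : ℕ) + 1 := by
        intro b j
        rw [Fin.succAbove]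
        rcases lt_or_ge ((j : ℕ)) ((b : ℕ)) with h | h
        · rw [if_pos (by rw [Fin.lt_def]; simp; omega), if_pos h]; simp
        · rw [if_neg (by rw [Fin.lt_def]; simp; omega), if_neg (by omega)]; simp
      have hminor : ∀ b : Fin (q + 2), M.submatrix Fin.succ (e (Sum.inl b)).succAbove
          = (Matrix.fromBlocks (B.submatrix Fin.succ b.succAbove) 0
              (C.submatrix id b.succAbove) A).submatrix (rMap p q) (cMap p q) := by
        intro b
        have hb : (b : ℕ) < q + 2 := b.isLt
        ext i j
        have hs := hsa b j
        simp only [hM, Matrix.submatrix_apply, rMap, cMap]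
        rcases lt_or_ge (i : ℕ) q with hi | hi <;> rcases lt_or_ge (j : ℕ) (q + 1) with hj | hj
        · rw [dif_pos (show ((Fin.succ i : Fin (p + (q+1) + 1)) : ℕ) < q + 1 by
                simp only [Fin.val_succ]; omega),
            dif_pos hi, dif_pos (show (((e (Sum.inl b)).succAbove j) : ℕ) < q + 1 + 1 by
                rw [hs]; split <;> omega),
            dif_pos hj]
          simp only [Matrix.fromBlocks_apply₁₁, Matrix.submatrix_apply]
          refine congr_arg₂ _ (Fin.ext ?_) (Fin.ext ?_) <;>
            (simp only [Fin.succAbove, Fin.lt_def, apply_ite Fin.val, Fin.coe_castSucc,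
                Fin.val_succ, heb] <;>
              first | (split_ifs <;> omega) | omega)
        · rw [dif_pos (show ((Fin.succ i : Fin (p + (q+1) + 1)) : ℕ) < q + 1 by
                simp only [Fin.val_succ]; omega),
            dif_pos hi, dif_neg (show ¬ (((e (Sum.inl b)).succAbove j) : ℕ) < q + 1 + 1 by
                rw [hs]; split <;> omega),
            dif_neg (show ¬ (j : ℕ) < q + 1 by omega)]
          simp only [Matrix.fromBlocks_apply₁₂, Matrix.zero_apply]
        · rw [dif_neg (show ¬ ((Fin.succ i : Fin (p + (q+1) + 1)) : ℕ) < q + 1 by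
                simp only [Fin.val_succ]; omega),
            dif_neg (show ¬ (i : ℕ) < q by omega), dif_pos (show (((e (Sum.inl b)).succAbove j) : ℕ) < q + 1 + 1 by
                rw [hs]; split <;> omega),
            dif_pos hj]
          simp only [Matrix.fromBlocks_apply₂₁, Matrix.submatrix_apply, id_eq]
          refine congr_arg₂ _ (Fin.ext ?_) (Fin.ext ?_) <;>
            (simp only [Fin.succAbove, Fin.lt_def, apply_ite Fin.val, Fin.coe_castSucc,
                Fin.val_succ, heb] <;>
              first | (split_ifs <;> omega) | omega)
        · rw [dif_neg (show ¬ ((Fin.succ i : Fin (p + (q+1) + 1)) : ℕ) < q + 1 by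
                simp only [Fin.val_succ]; omega),
            dif_neg (show ¬ (i : ℕ) < q by omega), dif_neg (show ¬ (((e (Sum.inl b)).succAbove j) : ℕ) < q + 1 + 1 by
                rw [hs]; split <;> omega),
            dif_neg (show ¬ (j : ℕ) < q + 1 by omega)]
          simp only [Matrix.fromBlocks_apply₂₂, Matrix.submatrix_apply, id_eq]
          refine congr_arg₂ _ (Fin.ext ?_) (Fin.ext ?_) <;>
            (simp only [Fin.succAbove, Fin.lt_def, apply_ite Fin.val, Fin.coe_castSucc,
                Fin.val_succ, heb] <;>
              first | (split_ifs <;> omega) | omega)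
      have hsnoc : ∀ (a : Fin (p + 1)) (b : Fin (q + 2)),
          Matrix.of (Fin.snoc (B.submatrix Fin.succ b.succAbove)
            ((C.submatrix id b.succAbove) a))
          = (Matrix.of (Fin.snoc B (C a))).submatrix Fin.succ b.succAbove := by
        intro a b
        ext i j
        refine Fin.lastCases ?_ ?_ i
        · simp [Fin.succ_last, Fin.snoc]
        · intro i'
          simp [Fin.snoc]
          congr 1
      have hrow0 : ∀ (a : Fin (p + 1)) (b : Fin (q + 2)),
          (Matrix.of (Fin.snoc B (C a))) 0 b = B 0 b := by
        intro a b
        simp [Fin.snoc]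
      have hMb : ∀ b : Fin (q + 2), M 0 (e (Sum.inl b)) = B 0 b := by
        intro b
        simp only [hM, Matrix.submatrix_apply]
        rw [show rMap p (q+1) 0 = Sum.inl ⟨0, by omega⟩ from by
            simp only [rMap]; rw [dif_pos (by simp)]; congr 1,
          show cMap p (q+1) (e (Sum.inl b)) = Sum.inl ⟨(b:ℕ), by omega⟩ from by
            simp only [cMap]; rw [dif_pos (by rw [heb b]; omega)]; exact congr_arg Sum.inl (Fin.ext (heb b))]
        simp only [Matrix.fromBlocks_apply₁₁]
        exact congr_arg₂ _ (Fin.ext (by simp)) (Fin.ext (by simp))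
      rw [show (∑ k : Fin p, (-1:R)^((e (Sum.inr k) : Fin (p+(q+1)+1)):ℕ) * M 0 (e (Sum.inr k)) *
            (M.submatrix Fin.succ (e (Sum.inr k)).succAbove).det) = 0 from
        Finset.sum_eq_zero fun k _ => by rw [hzero k]; ring, add_zero]
      calc (∑ b : Fin (q+2), (-1:R)^((e (Sum.inl b) : Fin (p+(q+1)+1)):ℕ) * M 0 (e (Sum.inl b)) *
            (M.submatrix Fin.succ (e (Sum.inl b)).succAbove).det)
          = ∑ b : Fin (q+2), ∑ a : Fin (p+1), (-1:R)^(a:ℕ) * (A.submatrix a.succAbove id).det *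
              ((-1:R)^(b:ℕ) * (Matrix.of (Fin.snoc B (C a))) 0 b *
                ((Matrix.of (Fin.snoc B (C a))).submatrix Fin.succ b.succAbove).det) := by
            refine Finset.sum_congr rfl fun b _ => ?_
            rw [heb b, hMb b, hminor b, ih, Finset.mul_sum]
            refine Finset.sum_congr rfl fun a _ => ?_
            rw [hsnoc a b, hrow0 a b]
            ring
        _ = ∑ a : Fin (p+1), (-1:R)^(a:ℕ) * (A.submatrix a.succAbove id).det *
              ∑ b : Fin (q+2), (-1:R)^(b:ℕ) * (Matrix.of (Fin.snoc B (C a))) 0 b *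
                ((Matrix.of (Fin.snoc B (C a))).submatrix Fin.succ b.succAbove).det := by
            rw [Finset.sum_comm]
            exact Finset.sum_congr rfl fun a _ => (Finset.mul_sum _ _ _).symm
        _ = ∑ a : Fin (p+1), (-1:R)^(a:ℕ) * (A.submatrix a.succAbove id).det *
              (Matrix.of (Fin.snoc B (C a))).det := by
            refine Finset.sum_congr rfl fun a _ => ?_
            rw [← Matrix.det_succ_row_zero]

private lemma snoc_det {R : Type*} [CommRing R] (q : ℕ)
    (B : Matrix (Fin q) (Fin (q + 1)) R) (c : Fin (q + 1) → R) :
    (Matrix.of (Fin.snoc B c)).det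
      = ∑ b : Fin (q + 1), (-1 : R) ^ (q + (b : ℕ)) * c b
          * (B.submatrix id b.succAbove).det := by
  rw [Matrix.det_succ_row _ (Fin.last q)]
  refine Finset.sum_congr rfl fun b _ => ?_
  have h1 : (Matrix.of (Fin.snoc B c)) (Fin.last q) b = c b := by
    simp [Fin.snoc]
  have h2 : (Matrix.of (Fin.snoc B c)).submatrix (Fin.last q).succAbove b.succAbove
      = B.submatrix id b.succAbove := by
    ext i j
    simp [Fin.succAbove_last, Fin.snoc]
  rw [h1, h2, Fin.val_last]

/-- Block determinant expansion: for an `(p+q+1) × (p+q+1)` matrix with block form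
`[[B, 0], [C, A]]` where `B` is `q × (q+1)`, `C` is `(p+1) × (q+1)`, `A` is `(p+1) × p`,
the determinant expands as a double sum over entries of `C` times complementary minors. -/
theorem block_det_expansion (p q : ℕ) (R : Type*) [CommRing R]
    (B : Matrix (Fin q) (Fin (q + 1)) R)
    (C : Matrix (Fin (p + 1)) (Fin (q + 1)) R)
    (A : Matrix (Fin (p + 1)) (Fin p) R)
    (N : Matrix (Fin (p + q + 1)) (Fin (p + q + 1)) R)
    (hN : N = Matrix.reindex
      (finSumFinEquiv.trans (finCongr (by omega : q + (p + 1) = p + q + 1)))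
      (finSumFinEquiv.trans (finCongr (by omega : (q + 1) + p = p + q + 1)))
      (Matrix.fromBlocks B 0 C A)) :
    N.det = ∑ a : Fin (p + 1), ∑ b : Fin (q + 1),
      (-1 : R) ^ (q + (a : ℕ) + (b : ℕ)) * C a b *
        (A.submatrix a.succAbove id).det * (B.submatrix id b.succAbove).det := by
  have hrow : ∀ i : Fin (p + q + 1),
      (finSumFinEquiv.trans (finCongr (by omega : q + (p + 1) = p + q + 1))).symm i
        = rMap p q i := by
    intro i
    rw [Equiv.symm_trans_apply, sumEquiv_symm]
    simp only [rMap, finCongr_symm, finCongr_apply, Fin.coe_cast]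
  have hcol : ∀ i : Fin (p + q + 1),
      (finSumFinEquiv.trans (finCongr (by omega : (q + 1) + p = p + q + 1))).symm i
        = cMap p q i := by
    intro i
    rw [Equiv.symm_trans_apply, sumEquiv_symm]
    simp only [cMap, finCongr_symm, finCongr_apply, Fin.coe_cast]
  have hN' : N = (Matrix.fromBlocks B 0 C A).submatrix (rMap p q) (cMap p q) := by
    rw [hN, Matrix.reindex_apply]
    exact congr_arg₂ (Matrix.fromBlocks B 0 C A).submatrix (funext hrow) (funext hcol)
  rw [hN', aux_det p A q B C]
  refine Finset.sum_congr rfl fun a _ => ?_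
  rw [snoc_det, Finset.mul_sum]
  refine Finset.sum_congr rfl fun b _ => ?_
  simp only [pow_add]
  ring
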